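/- If the ℕ-graded ℂ-vector space M is free as a module over the polynomial ring ℂ[z₁,…,zₙ] (with zᵢ acting as fᵢ, where f₁,…,fₙ are pairwise commuting homogeneous positive-degree endomorphisms), then: (1) each fᵢ is injective; (2) for all i ≠ j, fᵢ(M) ∩ fⱼ(M) = fᵢ(fⱼ(M)); and (3) the subspaces fᵢ(M) generate a distributive lattice, concretely: for all subsets S, T ⊆ {1,…,n}, (∑_{i∈S} fᵢ(M)) ∩ (∑_{j∈T} fⱼ(M)) = ∑_{i∈S, j∈T} (fᵢ(M) ∩ fⱼ(M)). -/

import Mathlib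

private lemma monOp_cons' {M : Type v} [AddCommGroup M] [Module ℂ M] {n : ℕ}
    (f : Fin (n+1) → M →ₗ[ℂ] M) (a : Fin (n+1) → ℕ) :
    (List.ofFn fun i => (f i) ^ (a i)).prod
      = (f 0) ^ (a 0) * (List.ofFn fun i : Fin n => (f i.succ) ^ (a i.succ)).prod := by
  rw [List.ofFn_succ, List.prod_cons]

private lemma monOp_step' {M : Type v} [AddCommGroup M] [Module ℂ M] :
    ∀ {n : ℕ} (f : Fin n → M →ₗ[ℂ] M), (∀ i j, Commute (f i) (f j)) →
    ∀ (a : Fin n → ℕ) (i : Fin n),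
      (List.ofFn fun j => (f j) ^ (Function.update a i (a i + 1) j)).prod
        = f i * (List.ofFn fun j => (f j) ^ (a j)).prod := by
  intro n
  induction n with
  | zero => intro f _ a i; exact i.elim0
  | succ n ih =>
    intro f hc a i
    rw [monOp_cons', monOp_cons']
    refine Fin.cases ?_ ?_ i
    · have h2 : ∀ k : Fin n, Function.update a 0 (a 0 + 1) k.succ = a k.succ := by
        intro k; rw [Function.update_of_ne (Fin.succ_ne_zero k)]
      simp only [Function.update_self, h2, pow_succ', mul_assoc]
    · intro j
      have h1 : Function.update a j.succ (a j.succ + 1) 0 = a 0 :=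
        Function.update_of_ne (Fin.succ_ne_zero j).symm _ _
      have h2 : ∀ k : Fin n, Function.update a j.succ (a j.succ + 1) k.succ
          = Function.update (fun k : Fin n => a k.succ) j (a j.succ + 1) k := by
        intro k
        by_cases hk : k = j
        · subst hk; simp
        · rw [Function.update_of_ne (by simpa using hk), Function.update_of_ne hk]
      have h3 := ih (fun k => f k.succ) (fun k l => hc _ _) (fun k => a k.succ) j
      simp only [h1, h2]
      rw [h3, ← mul_assoc, ← mul_assoc, ((hc 0 j.succ).pow_left (a 0)).eq]

/-- The composite operator `f₁^{a₁} ∘ ⋯ ∘ fₙ^{aₙ}`, the action of the monomial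
`z₁^{a₁}⋯zₙ^{aₙ}` when `zᵢ` acts as `fᵢ`. -/
noncomputable def monOp {M : Type v} [AddCommGroup M] [Module ℂ M] {n : ℕ}
    (f : Fin n → M →ₗ[ℂ] M) (a : Fin n → ℕ) : M →ₗ[ℂ] M :=
  (List.ofFn fun i => (f i) ^ (a i)).prod

private lemma monOp_step {M : Type v} [AddCommGroup M] [Module ℂ M] {n : ℕ}
    (f : Fin n → M →ₗ[ℂ] M) (hc : ∀ i j, Commute (f i) (f j)) (a : Fin n → ℕ) (i : Fin n) :
    monOp f (Function.update a i (a i + 1)) = f i ∘ₗ monOp f a :=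
  monOp_step' f hc a i

/-- If the `ℕ`-graded `ℂ`-vector space `M` is free over `ℂ[z₁,…,zₙ]` (with `zᵢ` acting
as the pairwise commuting homogeneous positive-degree endomorphism `fᵢ`), then each `fᵢ`
is injective, `fᵢ(M) ∩ fⱼ(M) = fᵢ(fⱼ(M))` for `i ≠ j`, and the subspaces `fᵢ(M)`
generate a distributive lattice:
`(∑_{i∈S} fᵢ(M)) ∩ (∑_{j∈T} fⱼ(M)) = ∑_{i∈S,j∈T} (fᵢ(M) ∩ fⱼ(M))`. -/
theorem injective_inter_distrib_of_free
    {M : Type v} [AddCommGroup M] [Module ℂ M]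
    (ℳ : ℕ → Submodule ℂ M) (hgr : DirectSum.IsInternal ℳ)
    {n : ℕ} (f : Fin n → M →ₗ[ℂ] M)
    (hcomm : ∀ i j, (f i) ∘ₗ (f j) = (f j) ∘ₗ (f i))
    (hhomog : ∀ i, ∃ d : ℕ, 1 ≤ d ∧ ∀ e : ℕ, ∀ m ∈ ℳ e, f i m ∈ ℳ (e + d))
    (hfree : ∃ (ι : Type v) (v : ι → M),
      LinearIndependent ℂ (fun q : (Fin n → ℕ) × ι => monOp f q.1 (v q.2)) ∧
      Submodule.span ℂ (Set.range fun q : (Fin n → ℕ) × ι => monOp f q.1 (v q.2)) = ⊤) :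
    (∀ i, Function.Injective (f i)) ∧
    (∀ i j, i ≠ j →
      LinearMap.range (f i) ⊓ LinearMap.range (f j)
        = Submodule.map (f i) (LinearMap.range (f j))) ∧
    (∀ S T : Finset (Fin n),
      (S.sup fun i => LinearMap.range (f i)) ⊓ (T.sup fun j => LinearMap.range (f j))
        = (S ×ˢ T).sup fun p => LinearMap.range (f p.1) ⊓ LinearMap.range (f p.2)) := by
  classical
  obtain ⟨ι, v, hli, hsp⟩ := hfree
  set b : (Fin n → ℕ) × ι → M := fun q => monOp f q.1 (v q.2) with hbdef
  have hc : ∀ i j, Commute (f i) (f j) := fun i j => hcomm i j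
  let B : Module.Basis ((Fin n → ℕ) × ι) ℂ M := Module.Basis.mk hli hsp.ge
  have hB : ⇑B = b := Module.Basis.coe_mk _ _
  -- shift of indices
  let σ : Fin n → ((Fin n → ℕ) × ι) → ((Fin n → ℕ) × ι) :=
    fun i q => (Function.update q.1 i (q.1 i + 1), q.2)
  have hstep : ∀ (i : Fin n) q, f i (b q) = b (σ i q) := by
    intro i q
    show f i (monOp f q.1 (v q.2)) = monOp f (Function.update q.1 i (q.1 i + 1)) (v q.2)
    rw [monOp_step f hc q.1 i]; rfl
  have hpred : ∀ (i : Fin n) q, 1 ≤ q.1 i →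
      b q = f i (b (Function.update q.1 i (q.1 i - 1), q.2)) := by
    intro i q hq
    rw [hstep]
    have he : (Function.update (Function.update q.1 i (q.1 i - 1)) i
        (Function.update q.1 i (q.1 i - 1) i + 1), q.2) = q := by
      rw [Function.update_self, Function.update_idem, Nat.sub_add_cancel hq,
        Function.update_eq_self]
    exact congrArg b he.symm
  let Bs : Fin n → Set ((Fin n → ℕ) × ι) := fun i => {q | 1 ≤ q.1 i}
  have hσmem : ∀ (i : Fin n) q, σ i q ∈ Bs i := by
    intro i q; show 1 ≤ Function.update q.1 i (q.1 i + 1) i; simp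
  have hrange : ∀ i, LinearMap.range (f i) = Submodule.span ℂ (b '' Bs i) := by
    intro i
    apply le_antisymm
    · rintro x ⟨y, rfl⟩
      have hy : y ∈ Submodule.span ℂ (Set.range b) := by rw [hsp]; trivial
      have : f i y ∈ Submodule.map (f i) (Submodule.span ℂ (Set.range b)) :=
        Submodule.mem_map_of_mem hy
      rw [Submodule.map_span] at this
      refine Submodule.span_mono ?_ this
      rintro _ ⟨_, ⟨q, rfl⟩, rfl⟩
      exact ⟨σ i q, hσmem i q, (hstep i q).symm⟩
    · rw [Submodule.span_le]
      rintro _ ⟨q, hq, rfl⟩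
      exact ⟨b (Function.update q.1 i (q.1 i - 1), q.2), (hpred i q hq).symm⟩
  have hinter : ∀ s t : Set ((Fin n → ℕ) × ι),
      Submodule.span ℂ (b '' s) ⊓ Submodule.span ℂ (b '' t)
        = Submodule.span ℂ (b '' (s ∩ t)) := by
    intro s t
    ext x
    rw [← hB]
    simp [Submodule.mem_inf, Module.Basis.mem_span_image, Set.subset_inter_iff]
  -- injectivity
  have hinj : ∀ i, Function.Injective (f i) := by
    intro i
    rw [← LinearMap.ker_eq_bot, Submodule.eq_bot_iff]
    intro x hx
    rw [LinearMap.mem_ker] at hx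
    have hσinj : Function.Injective (σ i) := by
      intro q q' h
      obtain ⟨h1, h2⟩ := Prod.ext_iff.mp h
      have h1' : Function.update q.1 i (q.1 i + 1) = Function.update q'.1 i (q'.1 i + 1) := h1
      have hfst : q.1 = q'.1 := by
        funext j
        by_cases hj : j = i
        · subst hj
          have := congrFun h1' j
          simpa using this
        · have := congrFun h1' j
          rwa [Function.update_of_ne hj, Function.update_of_ne hj] at this
      exact Prod.ext hfst h2
    have hli2 : LinearIndependent ℂ (b ∘ σ i) := hli.comp (σ i) hσinj
    have hx2 : Finsupp.linearCombination ℂ b (B.repr x) = x := by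
      rw [← hB]; exact B.linearCombination_repr x
    have hfx : Finsupp.linearCombination ℂ (b ∘ σ i) (B.repr x) = 0 := by
      have hfun : ⇑(f i) ∘ b = b ∘ σ i := funext fun q => hstep i q
      have heq : f i x = Finsupp.linearCombination ℂ (b ∘ σ i) (B.repr x) := by
        rw [← hx2, Finsupp.apply_linearCombination, hx2, hfun]
      rw [← heq, hx]
    have hr0 : B.repr x = 0 := linearIndependent_iff.mp hli2 _ hfx
    rw [← hx2, hr0, map_zero]
  refine ⟨hinj, ?_, ?_⟩
  · intro i j hij
    have h2 : Submodule.map (f i) (LinearMap.range (f j))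
        = Submodule.span ℂ (b '' (Bs i ∩ Bs j)) := by
      rw [hrange j, Submodule.map_span]
      apply le_antisymm
      · apply Submodule.span_mono
        rintro _ ⟨_, ⟨q, hq, rfl⟩, rfl⟩
        refine ⟨σ i q, ⟨hσmem i q, ?_⟩, (hstep i q).symm⟩
        show 1 ≤ Function.update q.1 i (q.1 i + 1) j
        rwa [Function.update_of_ne (Ne.symm hij)]
      · rw [Submodule.span_le]
        rintro x hmem
        obtain ⟨q, hq, rfl⟩ := hmem
        obtain ⟨hqi, hqj⟩ := hq
        apply Submodule.subset_span
        have hmem' : (Function.update q.1 i (q.1 i - 1), q.2) ∈ Bs j := by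
          show 1 ≤ Function.update q.1 i (q.1 i - 1) j
          rwa [Function.update_of_ne (Ne.symm hij)]
        exact ⟨b (Function.update q.1 i (q.1 i - 1), q.2),
          Set.mem_image_of_mem b hmem', (hpred i q hqi).symm⟩
    rw [h2, hrange i, hrange j, hinter]
  · intro S T
    have hsup : ∀ (κ : Type) [DecidableEq κ] (U : Finset κ) (g : κ → Set ((Fin n → ℕ) × ι)),
        (U.sup fun k => Submodule.span ℂ (b '' g k))
          = Submodule.span ℂ (b '' ⋃ k ∈ U, g k) := by
      intro κ _ U g
      induction U using Finset.induction with
      | empty => simp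
      | insert _ _ h ih =>
        rw [Finset.sup_insert, ih, ← Submodule.span_union, ← Set.image_union,
          Finset.set_biUnion_insert]
    have hLHS : ∀ (U : Finset (Fin n)),
        (U.sup fun i => LinearMap.range (f i))
          = Submodule.span ℂ (b '' ⋃ i ∈ U, Bs i) := by
      intro U
      rw [← hsup (Fin n) U Bs]
      exact Finset.sup_congr rfl fun i _ => hrange i
    have hRHS : ((S ×ˢ T).sup fun p => LinearMap.range (f p.1) ⊓ LinearMap.range (f p.2))
        = Submodule.span ℂ (b '' ⋃ p ∈ S ×ˢ T, (Bs p.1 ∩ Bs p.2)) := by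
      rw [← hsup (Fin n × Fin n) (S ×ˢ T) (fun p => Bs p.1 ∩ Bs p.2)]
      refine Finset.sup_congr rfl fun p _ => ?_
      rw [hrange p.1, hrange p.2, hinter]
    have hsets : ((⋃ i ∈ S, Bs i) ∩ ⋃ j ∈ T, Bs j) = ⋃ p ∈ S ×ˢ T, (Bs p.1 ∩ Bs p.2) := by
      apply Set.ext
      intro q
      simp only [Set.mem_inter_iff, Set.mem_iUnion, Finset.mem_product]
      constructor
      · rintro ⟨⟨i, hi, h1⟩, ⟨j, hj, h2⟩⟩
        exact ⟨(i, j), ⟨hi, hj⟩, h1, h2⟩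
      · rintro ⟨⟨i, j⟩, ⟨hi, hj⟩, h1, h2⟩
        exact ⟨⟨i, hi, h1⟩, ⟨j, hj, h2⟩⟩
    rw [hLHS S, hLHS T, hinter, hRHS, hsets]
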